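/- Equivalence of problem (2) and (4): for a kinetic metabolic network with rates v̄ = c ∘ κ(x̄,p), for every feasible solution (x̄, c) of the enzyme allocation problem (maximize v̄_{r*} subject to Σ_r w_r c_r = c^tot, v̄ ∈ C, v̄_{r*} > 0) there exists a feasible solution (x̄, c') additionally satisfying c'_r = 0 whenever v̄'_r = 0, with objective value v̄'_{r*} ≥ v̄_{r*}. Consequently the two problems have the same optimal value. -/
import Mathlib


def fluxCone {S R : Type*} [Fintype R] (N : Matrix S R ℝ) (Rirr : Set R) :
    Set (R → ℝ) :=
  {f | N.mulVec f = 0 ∧ ∀ r ∈ Rirr, 0 ≤ f r}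

/-- for every feasible solution `(x̄, c)` of the enzyme allocation
problem there is a feasible solution `(x̄, c')` with `c'_r = 0` whenever the
corresponding flux vanishes, and with objective value at least as large;
conversely, any solution feasible for the augmented problem is feasible for the
original one. Hence the two problems have the same optimal value. -/
theorem enzyme_allocation_support_restriction {S R : Type*}
    [Fintype S] [Fintype R] (N : Matrix S R ℝ) (Rirr : Set R)
    (κ : (S → ℝ) → R → ℝ) (w : R → ℝ) (hw : ∀ r, 0 < w r)
    (ctot : ℝ) (hctot : 0 < ctot) (rstar : R)
    (x : S → ℝ) (c : R → ℝ)
    (hc : ∀ r, 0 ≤ c r) (hbudget : ∑ r, w r * c r = ctot)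
    (hC : (fun r => c r * κ x r) ∈ fluxCone N Rirr)
    (hobj : 0 < c rstar * κ x rstar) :
    (∃ c' : R → ℝ,
      (∀ r, 0 ≤ c' r) ∧ (∑ r, w r * c' r = ctot) ∧
      (fun r => c' r * κ x r) ∈ fluxCone N Rirr ∧
      0 < c' rstar * κ x rstar ∧
      (∀ r, c' r * κ x r = 0 → c' r = 0) ∧
      c rstar * κ x rstar ≤ c' rstar * κ x rstar) := by
  classical
  set T : Finset R := Finset.univ.filter (fun r => c r * κ x r ≠ 0) with hT
  set s : ℝ := ∑ r ∈ T, w r * c r with hs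
  have hterm : ∀ r, 0 ≤ w r * c r := fun r => mul_nonneg (hw r).le (hc r)
  have hrstarT : rstar ∈ T := Finset.mem_filter.mpr ⟨Finset.mem_univ _, hobj.ne'⟩
  have hspos : 0 < s := by
    have h1 : 0 < w rstar * c rstar := by
      have hcr : 0 < c rstar := by
        rcases (hc rstar).lt_or_eq with h | h
        · exact h
        · exfalso; simp [← h] at hobj
      exact mul_pos (hw rstar) hcr
    exact Finset.sum_pos' (fun r _ => hterm r) ⟨rstar, hrstarT, h1⟩
  have hsle : s ≤ ctot := by
    rw [← hbudget]
    exact Finset.sum_le_sum_of_subset_of_nonneg (Finset.subset_univ T)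
      (fun r _ _ => hterm r)
  set lam : ℝ := ctot / s with hlam
  have hlampos : 0 < lam := div_pos hctot hspos
  have hlamge : 1 ≤ lam := (one_le_div hspos).mpr hsle
  refine ⟨fun r => if c r * κ x r ≠ 0 then lam * c r else 0, ?_, ?_, ?_, ?_, ?_, ?_⟩
  · intro r
    by_cases h : c r * κ x r = 0 <;> simp [h]
    exact mul_nonneg hlampos.le (hc r)
  · have : ∑ r, w r * (if c r * κ x r ≠ 0 then lam * c r else 0)
        = lam * ∑ r ∈ T, w r * c r := by
      rw [Finset.mul_sum, ← Finset.sum_filter_add_sum_filter_not Finset.univ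
        (fun r => c r * κ x r ≠ 0)]
      rw [show (∑ r ∈ Finset.univ.filter (fun r => ¬ c r * κ x r ≠ 0),
          w r * (if c r * κ x r ≠ 0 then lam * c r else 0)) = 0 by
        apply Finset.sum_eq_zero; intro r hr
        simp only [Finset.mem_filter, not_not] at hr
        simp [hr.2], add_zero]
      apply Finset.sum_congr rfl
      intro r hr
      simp only [Finset.mem_filter] at hr
      simp [hr.2]; ring
    rw [this, ← hs, hlam, div_mul_cancel₀ _ hspos.ne']
  · obtain ⟨hmul, hirr⟩ := hC
    have hv : (fun r => (if c r * κ x r ≠ 0 then lam * c r else 0) * κ x r)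
        = fun r => lam * (c r * κ x r) := by
      funext r
      by_cases h : c r * κ x r = 0 <;> simp [h] <;> ring
    constructor
    · rw [hv]
      have : (fun r => lam * (c r * κ x r)) = lam • (fun r => c r * κ x r) := rfl
      rw [this, Matrix.mulVec_smul, hmul, smul_zero]
    · intro r hr
      rw [hv]
      exact mul_nonneg hlampos.le (hirr r hr)
  · beta_reduce
    rw [if_pos hobj.ne', mul_assoc]
    exact mul_pos hlampos hobj
  · intro r hr
    by_cases h : c r * κ x r = 0
    · simp [h]
    · beta_reduce at hr ⊢
      rw [if_pos h] at hr ⊢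
      rw [mul_assoc] at hr
      rcases mul_eq_zero.mp hr with h1 | h2
      · exact absurd h1 hlampos.ne'
      · exact absurd h2 h
  · beta_reduce
    rw [if_pos hobj.ne', mul_assoc]
    exact le_mul_of_one_le_left hobj.le hlamge
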